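/- (Noisy separation/identifiability; core of Theorem 1.) Let f_1, …, f_t, H, r, s, e, Z₁, Z₂, H', Y', and M' = d·Y' be as in the noisy-histogram setting, and assume additionally that t(K−1) + r(s−e) < N − s. Then for every polynomial g of degree < K: ⟨W_{c_g}, M'⟩ ≥ d·(N − s) if and only if c_g ∈ {c^(1), …, c^(t)}. Consequently, thresholding the inner product with M' at d(N−s) exactly identifies the set of superimposed Reed–Solomon codewords. -/

import Mathlib

/-- noisy separation/identifiability; core of Theorem 1: In the
noisy-histogram setting, if additionally `t(K−1) + r(s−e) < N − s`, then for every
polynomial `g` of degree `< K`: `⟨W_{c_g}, M'⟩ ≥ d(N − s)` iff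
`c_g ∈ {c⁽¹⁾, …, c⁽ᵗ⁾}`. -/
theorem stmt14 (F : Type) [Field F] [Fintype F] [DecidableEq F]
    (K N t : ℕ) (hK : 1 ≤ K)
    (x : Fin N → F) (hx : Function.Injective x)
    (f : Fin t → Polynomial F) (hf : ∀ i, (f i).degree < K)
    (c : Fin t → Fin N → F) (hc : ∀ i j, c i j = Polynomial.eval (x j) (f i))
    (H : F → Fin N → ℕ)
    (hH : ∀ (α : F) (j : Fin N),
      H α j = (Finset.univ.filter (fun i : Fin t => c i j = α)).card)
    (r s e : ℕ)
    (Z1 Z2 : Finset (Fin N)) (hdisj : Disjoint Z1 Z2)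
    (hZ1 : Z1.card = e) (hZ2 : (Z2.card : ℤ) ≤ (s : ℤ) - (e : ℤ))
    (H' : F → Fin N → ℕ)
    (hHeq : ∀ j ∉ Z1 ∪ Z2, ∀ α : F, H' α j = H α j)
    (hHd1 : ∀ j ∈ Z2, (∑ α : F, ((H' α j : ℤ) - (H α j : ℤ)).natAbs) ≤ r)
    (Y' : F → Fin N → ℕ)
    (hY'Z1 : ∀ j ∈ Z1, ∀ α : F, Y' α j = 0)
    (hY'out : ∀ j ∉ Z1, ∀ α : F, Y' α j = if 0 < H' α j then 1 else 0)
    (d : ℕ) (hd : 1 ≤ d)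
    (W : (Fin N → F) → F → Fin N → ℕ)
    (hW : ∀ (cw : Fin N → F) (α : F) (j : Fin N), W cw α j = if cw j = α then 1 else 0)
    (hsep : (t : ℤ) * ((K : ℤ) - 1) + (r : ℤ) * ((s : ℤ) - (e : ℤ)) < (N : ℤ) - (s : ℤ)) :
    ∀ (g : Polynomial F), g.degree < K →
      ∀ (cg : Fin N → F), (∀ j, cg j = Polynomial.eval (x j) g) →
        ((d : ℤ) * ((N : ℤ) - (s : ℤ))
            ≤ ((∑ α : F, ∑ j : Fin N, W cg α j * (d * Y' α j) : ℕ) : ℤ)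
          ↔ ∃ i, cg = c i) := by
  classical
  intro g hg cg hcg
  -- simplify inner product
  have hinner : (∑ α : F, ∑ j : Fin N, W cg α j * (d * Y' α j))
      = d * ∑ j : Fin N, Y' (cg j) j := by
    rw [Finset.sum_comm, Finset.mul_sum]
    refine Finset.sum_congr rfl (fun j _ => ?_)
    rw [Finset.sum_eq_single (cg j)]
    · simp [hW]
    · intro α _ hne
      rw [hW, if_neg (fun h => hne h.symm), zero_mul]
    · simp
  have hYle : ∀ j α, Y' α j ≤ 1 := by
    intro j α
    by_cases hj : j ∈ Z1
    · simp [hY'Z1 j hj α]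
    · rw [hY'out j hj α]; split <;> simp
  set S := Finset.univ.filter (fun j : Fin N => Y' (cg j) j = 1) with hSdef
  have hsum : (∑ j : Fin N, Y' (cg j) j) = S.card := by
    rw [hSdef, Finset.card_filter]
    refine Finset.sum_congr rfl (fun j _ => ?_)
    rcases Nat.le_one_iff_eq_zero_or_eq_one.mp (hYle j (cg j)) with h | h <;> simp [h]
  have hes : (e : ℤ) ≤ s := by
    have : (0 : ℤ) ≤ Z2.card := Int.natCast_nonneg _
    linarith
  rw [hinner, hsum]
  have hdpos : (0 : ℤ) < d := by exact_mod_cast hd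
  have hmain : ((d : ℤ) * ((N : ℤ) - (s : ℤ)) ≤ ((d * S.card : ℕ) : ℤ))
      ↔ ((N : ℤ) - (s : ℤ) ≤ S.card) := by
    push_cast
    exact mul_le_mul_iff_right₀ hdpos
  rw [hmain]
  constructor
  · -- forward: threshold met → cg is one of the codewords
    intro hthr
    by_contra hne
    push_neg at hne
    -- S ⊆ A ∪ B
    set A := Finset.univ.filter (fun j : Fin N => ∃ i, c i j = cg j) with hAdef
    set B := Z2.filter (fun j : Fin N => 0 < H' (cg j) j ∧ H (cg j) j = 0) with hBdef
    have hSsub : S ⊆ A ∪ B := by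
      intro j hj
      rw [hSdef, Finset.mem_filter] at hj
      have hj1 : j ∉ Z1 := by
        intro h; rw [hY'Z1 j h] at hj; simp at hj
      have hH'pos : 0 < H' (cg j) j := by
        have := hj.2
        rw [hY'out j hj1] at this
        by_contra hcon
        simp [hcon] at this
      by_cases hj2 : j ∈ Z2
      · by_cases hHz : H (cg j) j = 0
        · exact Finset.mem_union_right _ (Finset.mem_filter.mpr ⟨hj2, hH'pos, hHz⟩)
        · refine Finset.mem_union_left _ (Finset.mem_filter.mpr ⟨Finset.mem_univ _, ?_⟩)
          rw [hH] at hHz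
          obtain ⟨i, hi⟩ := Finset.card_pos.mp (Nat.pos_of_ne_zero hHz)
          exact ⟨i, (Finset.mem_filter.mp hi).2⟩
      · have hout : j ∉ Z1 ∪ Z2 := by simp [hj1, hj2]
        have : 0 < H (cg j) j := by rw [← hHeq j hout]; exact hH'pos
        rw [hH] at this
        obtain ⟨i, hi⟩ := Finset.card_pos.mp this
        exact Finset.mem_union_left _
          (Finset.mem_filter.mpr ⟨Finset.mem_univ _, ⟨i, (Finset.mem_filter.mp hi).2⟩⟩)
    -- card A ≤ t*(K-1)
    have hAcard : A.card ≤ t * (K - 1) := by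
      have hsub : A ⊆ Finset.univ.biUnion
          (fun i : Fin t => Finset.univ.filter (fun j => c i j = cg j)) := by
        intro j hj
        rw [hAdef, Finset.mem_filter] at hj
        obtain ⟨i, hi⟩ := hj.2
        exact Finset.mem_biUnion.mpr ⟨i, Finset.mem_univ _,
          Finset.mem_filter.mpr ⟨Finset.mem_univ _, hi⟩⟩
      have hper : ∀ i : Fin t,
          (Finset.univ.filter (fun j => c i j = cg j)).card ≤ K - 1 := by
        intro i
        have hgf : g ≠ f i := by
          intro h
          apply hne i
          funext j
          rw [hcg j, hc i j, h]
        have hp0 : g - f i ≠ 0 := sub_ne_zero.mpr hgf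
        have hpdeg : (g - f i).natDegree ≤ K - 1 := by
          have h1 : (g - f i).degree < (K : ℕ) :=
            lt_of_le_of_lt (Polynomial.degree_sub_le _ _) (max_lt hg (hf i))
          have h2 : (g - f i).natDegree < K :=
            (Polynomial.natDegree_lt_iff_degree_lt hp0).mpr h1
          omega
        calc (Finset.univ.filter (fun j => c i j = cg j)).card
            ≤ (g - f i).roots.toFinset.card := by
              apply Finset.card_le_card_of_injOn x
              · intro j hj
                rw [Finset.mem_coe, Finset.mem_filter] at hj
                rw [Finset.mem_coe, Multiset.mem_toFinset, Polynomial.mem_roots hp0]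
                simp only [Polynomial.IsRoot, Polynomial.eval_sub]
                rw [← hcg j, ← hc i j, hj.2, sub_self]
              · exact fun a _ b _ h => hx h
          _ ≤ Multiset.card (g - f i).roots := (g - f i).roots.toFinset_card_le
          _ ≤ (g - f i).natDegree := Polynomial.card_roots' _
          _ ≤ K - 1 := hpdeg
      calc A.card ≤ _ := Finset.card_le_card hsub
        _ ≤ ∑ i : Fin t, (Finset.univ.filter (fun j => c i j = cg j)).card :=
            Finset.card_biUnion_le
        _ ≤ ∑ _i : Fin t, (K - 1) := Finset.sum_le_sum (fun i _ => hper i)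
        _ = t * (K - 1) := by simp [Finset.sum_const, mul_comm]
    -- card B bound
    have hBcard : (B.card : ℤ) ≤ (r : ℤ) * ((s : ℤ) - (e : ℤ)) := by
      rcases Nat.eq_zero_or_pos r with hr | hr
      · have hBempty : B = ∅ := by
          rw [hBdef, Finset.filter_eq_empty_iff]
          intro j hj hcon
          have hd1 := hHd1 j hj
          rw [hr] at hd1
          have hall := Finset.sum_eq_zero_iff.mp (Nat.le_zero.mp hd1) (cg j) (Finset.mem_univ _)
          have : (H' (cg j) j : ℤ) = (H (cg j) j : ℤ) := by omega
          omega
        simp [hBempty, hr]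
      · have h1 : (B.card : ℤ) ≤ Z2.card := by
          exact_mod_cast Finset.card_le_card (Finset.filter_subset _ _)
        have h2 : (1 : ℤ) ≤ r := by exact_mod_cast hr
        nlinarith [hZ2, hes]
    -- combine
    have hScard : (S.card : ℤ) ≤ (t : ℤ) * ((K : ℤ) - 1) + (r : ℤ) * ((s : ℤ) - (e : ℤ)) := by
      have h1 : S.card ≤ A.card + B.card :=
        le_trans (Finset.card_le_card hSsub) (Finset.card_union_le _ _)
      have h2 : ((t * (K - 1) : ℕ) : ℤ) = (t : ℤ) * ((K : ℤ) - 1) := by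
        push_cast [Nat.cast_sub hK]; ring
      have h3 : (A.card : ℤ) ≤ (t : ℤ) * ((K : ℤ) - 1) := by
        rw [← h2]; exact_mod_cast hAcard
      have h4 : (S.card : ℤ) ≤ (A.card : ℤ) + B.card := by exact_mod_cast h1
      linarith
    linarith
  · -- backward: cg = c i → threshold met
    rintro ⟨i, hi⟩
    have hsub : Finset.univ \ (Z1 ∪ Z2) ⊆ S := by
      intro j hj
      rw [Finset.mem_sdiff] at hj
      have hj1 : j ∉ Z1 := fun h => hj.2 (Finset.mem_union_left _ h)
      rw [hSdef, Finset.mem_filter]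
      refine ⟨Finset.mem_univ _, ?_⟩
      rw [hY'out j hj1, hHeq j hj.2]
      have : 0 < H (cg j) j := by
        rw [hH]
        apply Finset.card_pos.mpr
        exact ⟨i, Finset.mem_filter.mpr ⟨Finset.mem_univ _, by rw [hi]⟩⟩
      simp [this]
    have hcard1 : (Finset.univ \ (Z1 ∪ Z2)).card = N - (Z1 ∪ Z2).card := by
      rw [Finset.card_sdiff_of_subset (Finset.subset_univ _), Finset.card_univ, Fintype.card_fin]
    have hUle : ((Z1 ∪ Z2).card : ℤ) ≤ s := by
      have := Finset.card_union_le Z1 Z2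
      have h1 : ((Z1 ∪ Z2).card : ℤ) ≤ (Z1.card : ℤ) + Z2.card := by exact_mod_cast this
      rw [hZ1] at h1
      linarith
    have hUleN : (Z1 ∪ Z2).card ≤ N := by
      have := Finset.card_le_card (Finset.subset_univ (Z1 ∪ Z2))
      simpa using this
    have hScard : ((N : ℤ) - (Z1 ∪ Z2).card) ≤ S.card := by
      have := Finset.card_le_card hsub
      rw [hcard1] at this
      have h2 : ((N - (Z1 ∪ Z2).card : ℕ) : ℤ) = (N : ℤ) - (Z1 ∪ Z2).card := by
        push_cast [Nat.cast_sub hUleN]; ring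
      calc (N : ℤ) - (Z1 ∪ Z2).card = ((N - (Z1 ∪ Z2).card : ℕ) : ℤ) := h2.symm
        _ ≤ S.card := by exact_mod_cast this
    linarith
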